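/- arXiv:quant-ph/0511069 — 2 statements merged into one kernel-verified Lean document; each statement's English description precedes it below -/
import Mathlib

section
/- Let G' be a finite simple graph on an n-element vertex set, let u ∈ V(G'), and let the neighborhood of u in G' be partitioned as N(u) = A ⊔ A'. Let Ḡ be the induced subgraph of G' on V(G')∖{u}, and let G be the simple graph on vertex set (V(G')∖{u}) ∪ {v, w, v'} (three new vertices) whose edges are the edges of Ḡ together with {v,a} for each a ∈ A, {v',a'} for each a' ∈ A', and {v,w}, {w,v'}. Then contracting qubit w of |G⟩ against |+⟩ gives ⟨+|_w |G⟩ = (1/2)·( |0⟩_v |0⟩_{v'} ⊗ |Ḡ⟩ + |1⟩_v |1⟩_{v'} ⊗ Z[A ∪ A'] |Ḡ⟩ ), where |b⟩_v |b'⟩_{v'} ⊗ |S'⟩ denotes the computational basis state of the qubits (V(G')∖{u}) ∪ {v,v'} in which v has value b, v' has value b', and the remaining qubits are given by S' ⊆ V(G')∖{u}. -/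
/-- The number of edges of `H` with both endpoints in `S`. -/
noncomputable def edgesIn {W : Type} (H : SimpleGraph W) (S : Finset W) : ℕ :=
  Set.ncard {e : Sym2 W | e ∈ H.edgeSet ∧ ∀ x ∈ e, x ∈ S}

/-- The graph state `|H⟩ = 2^{-m/2} ∑_{S ⊆ W} (-1)^{e(S)} |S⟩`, given by its coordinates in
the computational basis indexed by the subsets `S` of the vertex set. -/
noncomputable def graphState {W : Type} [Fintype W] (H : SimpleGraph W) : Finset W → ℂ :=
  fun S => (-1 : ℂ) ^ edgesIn H S / ((Real.sqrt 2 : ℝ) : ℂ) ^ Fintype.card W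

/-- Contraction of the qubit `w` against `|+⟩ = (|0⟩ + |1⟩)/√2`: the linear map sending each
basis state `|S⟩` to `2^{-1/2} |S \ {w}⟩`, expressed on coordinates. -/
noncomputable def contractPlus {W : Type} [DecidableEq W] (w : W)
    (ψ : Finset W → ℂ) : Finset {x : W // x ≠ w} → ℂ :=
  fun S =>
    (ψ (S.map (Function.Embedding.subtype fun x => x ≠ w)) +
     ψ (insert w (S.map (Function.Embedding.subtype fun x => x ≠ w)))) /
      ((Real.sqrt 2 : ℝ) : ℂ)

/-- Contraction of the qubit `w` against `|−⟩ = (|0⟩ − |1⟩)/√2`: the linear map sending each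
basis state `|S⟩` to `2^{-1/2} (−1)^{[w ∈ S]} |S \ {w}⟩`, expressed on coordinates. -/
noncomputable def contractMinus {W : Type} [DecidableEq W] (w : W)
    (ψ : Finset W → ℂ) : Finset {x : W // x ≠ w} → ℂ :=
  fun S =>
    (ψ (S.map (Function.Embedding.subtype fun x => x ≠ w)) -
     ψ (insert w (S.map (Function.Embedding.subtype fun x => x ≠ w)))) /
      ((Real.sqrt 2 : ℝ) : ℂ)

/-- The diagonal operator `Z[B]`, sending `|S⟩` to `(-1)^{|B ∩ S|} |S⟩`. -/
noncomputable def Zop {U : Type} [DecidableEq U] (B : Finset U) (φ : Finset U → ℂ) :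
    Finset U → ℂ :=
  fun S => (-1 : ℂ) ^ (B ∩ S).card * φ S

/-- The vertex set `(V(G') \ {u}) ∪ {v, w, v'}`: the three new vertices `v`, `w`, `v'` are
`Sum.inr 0`, `Sum.inr 1`, `Sum.inr 2` respectively. -/
abbrev BigVert (V' : Type) (u : V') : Type := {x : V' // x ≠ u} ⊕ Fin 3

/-- The relation generating the graph `G`: the edges of the induced subgraph of `G'` on
`V(G') \ {u}`, together with `{v, a}` for `a ∈ A`, `{v', a'}` for `a' ∈ A'`, and the path
edges `{v, w}`, `{w, v'}`. -/
def bigRel {V' : Type} (G' : SimpleGraph V') (u : V') (A A' : Finset V') :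
    BigVert V' u → BigVert V' u → Prop
  | Sum.inl a, Sum.inl b => G'.Adj a.val b.val
  | Sum.inl a, Sum.inr i => (i = 0 ∧ a.val ∈ A) ∨ (i = 2 ∧ a.val ∈ A')
  | Sum.inr i, Sum.inr j => (i = 0 ∧ j = 1) ∨ (i = 1 ∧ j = 2)
  | Sum.inr _, Sum.inl _ => False

/-- The graph `G` obtained from `G'` by replacing the vertex `u` by the path `v - w - v'`,
with `v` adjacent to the neighbors of `u` in `A` and `v'` to those in `A'`. -/
def bigG {V' : Type} (G' : SimpleGraph V') (u : V') (A A' : Finset V') :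
    SimpleGraph (BigVert V' u) := SimpleGraph.fromRel (bigRel G' u A A')

/-- The inserted middle vertex `w`. -/
abbrev wVert (V' : Type) (u : V') : BigVert V' u := Sum.inr 1

/-- The vertex set after contracting the qubit `w`. -/
abbrev RemVert (V' : Type) (u : V') : Type := {x : BigVert V' u // x ≠ wVert V' u}

/-- The inserted vertex `v`, as a vertex of the remaining qubits. -/
def vVert (V' : Type) (u : V') : RemVert V' u :=
  ⟨Sum.inr 0, fun h => absurd (Sum.inr.inj h) (by decide)⟩

/-- The inserted vertex `v'`, as a vertex of the remaining qubits. -/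
def v'Vert (V' : Type) (u : V') : RemVert V' u :=
  ⟨Sum.inr 2, fun h => absurd (Sum.inr.inj h) (by decide)⟩

/-- The restriction of a subset `T` of the remaining qubits to the qubits `V(G') \ {u}`. -/
def restrictT {V' : Type} [Fintype V'] [DecidableEq V'] (u : V')
    (T : Finset (RemVert V' u)) : Finset {x : V' // x ≠ u} :=
  Finset.univ.filter (fun a : {x : V' // x ≠ u} =>
    (⟨Sum.inl a, Sum.inl_ne_inr⟩ : RemVert V' u) ∈ T)

/-- `extendVV u bv bv' φ` is the state `|bv⟩_v |bv'⟩_{v'} ⊗ φ` on the qubits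
`(V(G') \ {u}) ∪ {v, v'}`, expressed on coordinates. -/
noncomputable def extendVV {V' : Type} [Fintype V'] [DecidableEq V'] (u : V')
    (bv bv' : Bool) (φ : Finset {x : V' // x ≠ u} → ℂ) : Finset (RemVert V' u) → ℂ :=
  fun T =>
    if ((vVert V' u ∈ T) ↔ bv = true) ∧ ((v'Vert V' u ∈ T) ↔ bv' = true) then
      φ (restrictT u T)
    else 0

section Aux
variable {V' : Type} (G' : SimpleGraph V') (u : V') (A A' : Finset V')

lemma adj_inl_inl (a b : {x : V' // x ≠ u}) :
    (bigG G' u A A').Adj (Sum.inl a) (Sum.inl b) ↔ G'.Adj a.1 b.1 := by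
  rw [bigG, SimpleGraph.fromRel_adj]
  constructor
  · rintro ⟨-, h | h⟩
    · exact h
    · exact h.symm
  · intro h
    exact ⟨fun he => h.ne (congrArg Subtype.val (Sum.inl.inj he)), Or.inl h⟩

lemma adj_inl_inr (a : {x : V' // x ≠ u}) (i : Fin 3) :
    (bigG G' u A A').Adj (Sum.inl a) (Sum.inr i) ↔
      (i = 0 ∧ a.1 ∈ A) ∨ (i = 2 ∧ a.1 ∈ A') := by
  rw [bigG, SimpleGraph.fromRel_adj]
  simp [bigRel]

lemma adj_inr_inl (a : {x : V' // x ≠ u}) (i : Fin 3) :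
    (bigG G' u A A').Adj (Sum.inr i) (Sum.inl a) ↔
      (i = 0 ∧ a.1 ∈ A) ∨ (i = 2 ∧ a.1 ∈ A') := by
  rw [SimpleGraph.adj_comm]; exact adj_inl_inr G' u A A' a i

lemma adj_inr_inr (i j : Fin 3) :
    (bigG G' u A A').Adj (Sum.inr i) (Sum.inr j) ↔
      ((i = 0 ∧ j = 1) ∨ (i = 1 ∧ j = 2)) ∨ ((j = 0 ∧ i = 1) ∨ (j = 1 ∧ i = 2)) := by
  rw [bigG, SimpleGraph.fromRel_adj]
  constructor
  · rintro ⟨-, h | h⟩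
    · exact Or.inl h
    · exact Or.inr h
  · intro h
    refine ⟨?_, ?_⟩
    · rintro he
      have := Sum.inr.inj he
      subst this
      rcases h with (⟨h1, h2⟩ | ⟨h1, h2⟩) | (⟨h1, h2⟩ | ⟨h1, h2⟩) <;> simp_all
    · rcases h with h | h
      · exact Or.inl h
      · exact Or.inr h

end Aux

section Aux2
variable {V' : Type} [Fintype V'] [DecidableEq V'] (G' : SimpleGraph V') (u : V')
  (A A' : Finset V')

/-- The set of remaining qubits, seen inside `BigVert`. -/
noncomputable def SB (T : Finset (RemVert V' u)) : Finset (BigVert V' u) :=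
  T.map (Function.Embedding.subtype fun x => x ≠ wVert V' u)

lemma mem_SB {T : Finset (RemVert V' u)} {y : BigVert V' u} (hy : y ≠ wVert V' u) :
    y ∈ SB u T ↔ (⟨y, hy⟩ : RemVert V' u) ∈ T := by
  simp only [SB, Finset.mem_map, Function.Embedding.coe_subtype]
  constructor
  · rintro ⟨x, hx, rfl⟩; exact hx
  · intro h; exact ⟨⟨y, hy⟩, h, rfl⟩

lemma w_not_mem_SB (T : Finset (RemVert V' u)) : wVert V' u ∉ SB u T := by
  simp only [SB, Finset.mem_map, Function.Embedding.coe_subtype]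
  rintro ⟨x, -, hx⟩; exact x.2 hx

lemma inl_mem_SB {T : Finset (RemVert V' u)} (a : {x : V' // x ≠ u}) :
    (Sum.inl a : BigVert V' u) ∈ SB u T ↔ a ∈ restrictT u T := by
  rw [mem_SB u Sum.inl_ne_inr, restrictT, Finset.mem_filter]
  simp

lemma inr0_mem_SB {T : Finset (RemVert V' u)} :
    (Sum.inr 0 : BigVert V' u) ∈ SB u T ↔ vVert V' u ∈ T :=
  mem_SB u (vVert V' u).2

lemma inr2_mem_SB {T : Finset (RemVert V' u)} :
    (Sum.inr 2 : BigVert V' u) ∈ SB u T ↔ v'Vert V' u ∈ T :=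
  mem_SB u (v'Vert V' u).2

end Aux2

section Aux3
variable {V' : Type} [Fintype V'] [DecidableEq V'] (G' : SimpleGraph V') (u : V')
  (A A' : Finset V')

lemma edgesIn_SB (T : Finset (RemVert V' u)) :
    edgesIn (bigG G' u A A') (SB u T) =
      edgesIn (SimpleGraph.comap Subtype.val G') (restrictT u T)
      + (if vVert V' u ∈ T then ((restrictT u T).filter (fun a => a.1 ∈ A)).card else 0)
      + (if v'Vert V' u ∈ T then ((restrictT u T).filter (fun a => a.1 ∈ A')).card else 0) := by
  classical
  set T' := restrictT u T with hT'
  set E : Set (Sym2 (BigVert V' u)) :=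
    {e | e ∈ (bigG G' u A A').edgeSet ∧ ∀ x ∈ e, x ∈ SB u T} with hE
  set E₀ : Set (Sym2 (BigVert V' u)) :=
    Sym2.map (fun a : {x : V' // x ≠ u} => (Sum.inl a : BigVert V' u)) ''
      {e | e ∈ (SimpleGraph.comap Subtype.val G').edgeSet ∧ ∀ x ∈ e, x ∈ T'} with hE₀
  set E₁ : Set (Sym2 (BigVert V' u)) :=
    (fun a : {x : V' // x ≠ u} => s((Sum.inr 0 : BigVert V' u), Sum.inl a)) ''
      {a | a ∈ T' ∧ a.1 ∈ A ∧ vVert V' u ∈ T} with hE₁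
  set E₂ : Set (Sym2 (BigVert V' u)) :=
    (fun a : {x : V' // x ≠ u} => s((Sum.inr 2 : BigVert V' u), Sum.inl a)) ''
      {a | a ∈ T' ∧ a.1 ∈ A' ∧ v'Vert V' u ∈ T} with hE₂
  have hsplit : E = E₀ ∪ E₁ ∪ E₂ := by
    ext e
    induction e using Sym2.ind with
    | _ x y =>
      constructor
      · rintro ⟨he, hm⟩
        have hx : x ∈ SB u T := hm x (by simp)
        have hy : y ∈ SB u T := hm y (by simp)
        rw [SimpleGraph.mem_edgeSet] at he
        match x, y with
        | Sum.inl a, Sum.inl b =>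
          left; left
          refine ⟨s(a, b), ⟨?_, ?_⟩, by rw [Sym2.map_pair_eq]⟩
          · rw [SimpleGraph.mem_edgeSet, SimpleGraph.comap_adj]
            exact (adj_inl_inl G' u A A' a b).mp he
          · intro z hz
            rcases Sym2.mem_iff.mp hz with rfl | rfl
            · exact (inl_mem_SB u z).mp hx
            · exact (inl_mem_SB u z).mp hy
        | Sum.inl a, Sum.inr i =>
          rcases (adj_inl_inr G' u A A' a i).mp he with ⟨rfl, ha⟩ | ⟨rfl, ha⟩
          · left; right
            exact ⟨a, ⟨(inl_mem_SB u a).mp hx, ha, (inr0_mem_SB u).mp hy⟩, Sym2.eq_swap⟩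
          · right
            exact ⟨a, ⟨(inl_mem_SB u a).mp hx, ha, (inr2_mem_SB u).mp hy⟩, Sym2.eq_swap⟩
        | Sum.inr i, Sum.inl a =>
          rcases (adj_inr_inl G' u A A' a i).mp he with ⟨rfl, ha⟩ | ⟨rfl, ha⟩
          · left; right
            exact ⟨a, ⟨(inl_mem_SB u a).mp hy, ha, (inr0_mem_SB u).mp hx⟩, rfl⟩
          · right
            exact ⟨a, ⟨(inl_mem_SB u a).mp hy, ha, (inr2_mem_SB u).mp hx⟩, rfl⟩
        | Sum.inr i, Sum.inr j =>
          exfalso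
          rcases (adj_inr_inr G' u A A' i j).mp he with (⟨h1, h2⟩ | ⟨h1, h2⟩) | (⟨h1, h2⟩ | ⟨h1, h2⟩)
          · subst h2; exact w_not_mem_SB u T hy
          · subst h1; exact w_not_mem_SB u T hx
          · subst h2; exact w_not_mem_SB u T hx
          · subst h1; exact w_not_mem_SB u T hy
      · rintro ((h | h) | h)
        · obtain ⟨e0, ⟨he0, hm0⟩, heq⟩ := h
          induction e0 using Sym2.ind with
          | _ a b =>
            rw [Sym2.map_pair_eq] at heq
            rw [← heq]
            refine ⟨?_, ?_⟩
            · rw [SimpleGraph.mem_edgeSet, adj_inl_inl]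
              rw [SimpleGraph.mem_edgeSet, SimpleGraph.comap_adj] at he0
              exact he0
            · intro z hz
              rcases Sym2.mem_iff.mp hz with rfl | rfl
              · exact (inl_mem_SB u a).mpr (hm0 a (by simp))
              · exact (inl_mem_SB u b).mpr (hm0 b (by simp))
        · obtain ⟨a, ⟨ha1, ha2, ha3⟩, heq⟩ := h
          rw [← heq]
          refine ⟨?_, ?_⟩
          · rw [SimpleGraph.mem_edgeSet, adj_inr_inl]
            exact Or.inl ⟨rfl, ha2⟩
          · intro z hz
            rcases Sym2.mem_iff.mp hz with rfl | rfl
            · exact (inr0_mem_SB u).mpr ha3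
            · exact (inl_mem_SB u a).mpr ha1
        · obtain ⟨a, ⟨ha1, ha2, ha3⟩, heq⟩ := h
          rw [← heq]
          refine ⟨?_, ?_⟩
          · rw [SimpleGraph.mem_edgeSet, adj_inr_inl]
            exact Or.inr ⟨rfl, ha2⟩
          · intro z hz
            rcases Sym2.mem_iff.mp hz with rfl | rfl
            · exact (inr2_mem_SB u).mpr ha3
            · exact (inl_mem_SB u a).mpr ha1
  have h01 : Disjoint E₀ E₁ := by
    rw [Set.disjoint_left]
    rintro e ⟨e0, -, h1⟩ ⟨a, -, h2⟩
    dsimp only at h1 h2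
    rw [← h2] at h1
    have : (Sum.inr 0 : BigVert V' u) ∈
        Sym2.map (fun a : {x : V' // x ≠ u} => (Sum.inl a : BigVert V' u)) e0 := by
      rw [h1]; simp
    rcases Sym2.mem_map.mp this with ⟨b, -, hb⟩
    exact Sum.inl_ne_inr hb
  have h02 : Disjoint E₀ E₂ := by
    rw [Set.disjoint_left]
    rintro e ⟨e0, -, h1⟩ ⟨a, -, h2⟩
    dsimp only at h1 h2
    rw [← h2] at h1
    have : (Sum.inr 2 : BigVert V' u) ∈
        Sym2.map (fun a : {x : V' // x ≠ u} => (Sum.inl a : BigVert V' u)) e0 := by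
      rw [h1]; simp
    rcases Sym2.mem_map.mp this with ⟨b, -, hb⟩
    exact Sum.inl_ne_inr hb
  have h12 : Disjoint E₁ E₂ := by
    rw [Set.disjoint_left]
    rintro e ⟨a, -, h1⟩ ⟨b, -, h2⟩
    dsimp only at h1 h2
    rw [← h2] at h1
    rw [Sym2.eq_iff] at h1
    rcases h1 with ⟨h, -⟩ | ⟨h, -⟩
    · exact absurd (Sum.inr.inj h) (by decide)
    · exact Sum.inr_ne_inl h
  have hcard : E.ncard = E₀.ncard + E₁.ncard + E₂.ncard := by
    rw [hsplit, Set.ncard_union_eq (by exact Set.disjoint_union_left.mpr ⟨h02, h12⟩)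
        (Set.toFinite _) (Set.toFinite _),
      Set.ncard_union_eq h01 (Set.toFinite _) (Set.toFinite _)]
  have hc0 : E₀.ncard = edgesIn (SimpleGraph.comap Subtype.val G') T' := by
    rw [hE₀, Set.ncard_image_of_injective _ (Sym2.map.injective Sum.inl_injective)]
    rfl
  have hc1 : E₁.ncard = if vVert V' u ∈ T then (T'.filter (fun a => a.1 ∈ A)).card else 0 := by
    rw [hE₁, Set.ncard_image_of_injective _ ?_]
    · split_ifs with hv
      · have : {a : {x : V' // x ≠ u} | a ∈ T' ∧ a.1 ∈ A ∧ vVert V' u ∈ T} =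
            ↑(T'.filter (fun a => a.1 ∈ A)) := by
          ext a; simp [hv]
        rw [this, Set.ncard_coe_finset]
      · have : {a : {x : V' // x ≠ u} | a ∈ T' ∧ a.1 ∈ A ∧ vVert V' u ∈ T} = ∅ := by
          ext a; simp [hv]
        rw [this, Set.ncard_empty]
    · intro a b hab
      simp only [Sym2.eq_iff] at hab
      rcases hab with ⟨-, h⟩ | ⟨h, -⟩
      · exact Sum.inl_injective h
      · exact absurd h.symm Sum.inl_ne_inr
  have hc2 : E₂.ncard = if v'Vert V' u ∈ T then (T'.filter (fun a => a.1 ∈ A')).card else 0 := by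
    rw [hE₂, Set.ncard_image_of_injective _ ?_]
    · split_ifs with hv
      · have : {a : {x : V' // x ≠ u} | a ∈ T' ∧ a.1 ∈ A' ∧ v'Vert V' u ∈ T} =
            ↑(T'.filter (fun a => a.1 ∈ A')) := by
          ext a; simp [hv]
        rw [this, Set.ncard_coe_finset]
      · have : {a : {x : V' // x ≠ u} | a ∈ T' ∧ a.1 ∈ A' ∧ v'Vert V' u ∈ T} = ∅ := by
          ext a; simp [hv]
        rw [this, Set.ncard_empty]
    · intro a b hab
      simp only [Sym2.eq_iff] at hab
      rcases hab with ⟨-, h⟩ | ⟨h, -⟩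
      · exact Sum.inl_injective h
      · exact absurd h.symm Sum.inl_ne_inr
  show E.ncard = _
  rw [hcard, hc0, hc1, hc2]

end Aux3

section Aux4
variable {V' : Type} [Fintype V'] [DecidableEq V'] (G' : SimpleGraph V') (u : V')
  (A A' : Finset V')

lemma edgesIn_insert_w (T : Finset (RemVert V' u)) :
    edgesIn (bigG G' u A A') (insert (wVert V' u) (SB u T)) =
      edgesIn (bigG G' u A A') (SB u T)
      + ((if vVert V' u ∈ T then 1 else 0) + (if v'Vert V' u ∈ T then 1 else 0)) := by
  classical
  set E : Set (Sym2 (BigVert V' u)) :=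
    {e | e ∈ (bigG G' u A A').edgeSet ∧ ∀ x ∈ e, x ∈ SB u T} with hE
  set E' : Set (Sym2 (BigVert V' u)) :=
    {e | e ∈ (bigG G' u A A').edgeSet ∧ ∀ x ∈ e, x ∈ insert (wVert V' u) (SB u T)} with hE'
  set Ew : Set (Sym2 (BigVert V' u)) :=
    {e | (e = s((Sum.inr 0 : BigVert V' u), Sum.inr 1) ∧ vVert V' u ∈ T) ∨
         (e = s((Sum.inr 1 : BigVert V' u), Sum.inr 2) ∧ v'Vert V' u ∈ T)} with hEw
  have hsub : E ⊆ E' := by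
    rintro e ⟨he, hm⟩
    exact ⟨he, fun z hz => Finset.mem_insert_of_mem (hm z hz)⟩
  have hw_notin : ∀ e ∈ E, wVert V' u ∉ e := by
    rintro e ⟨-, hm⟩ hw
    exact w_not_mem_SB u T (hm _ hw)
  have hsplit : E' = E ∪ Ew := by
    ext e
    induction e using Sym2.ind with
    | _ x y =>
      constructor
      · rintro ⟨he, hm⟩
        by_cases hw : wVert V' u ∈ s(x, y)
        · right
          rw [SimpleGraph.mem_edgeSet] at he
          have hadj := he
          rcases Sym2.mem_iff.mp hw with rfl | rfl
          · -- x = w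
            match y, hadj with
            | Sum.inl a, hadj =>
              exact absurd ((adj_inr_inl G' u A A' a 1).mp hadj) (by simp)
            | Sum.inr j, hadj =>
              have hy : (Sum.inr j : BigVert V' u) ∈ insert (wVert V' u) (SB u T) :=
                hm _ (by simp)
              rcases (adj_inr_inr G' u A A' 1 j).mp hadj with (⟨h1, h2⟩ | ⟨h1, h2⟩) | (⟨h1, h2⟩ | ⟨h1, h2⟩)
              · exact absurd h1 (by decide)
              · subst h2
                right
                refine ⟨rfl, ?_⟩
                rcases Finset.mem_insert.mp hy with h | h
                · exact absurd (Sum.inr.inj h) (by decide)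
                · exact (inr2_mem_SB u).mp h
              · subst h1
                left
                refine ⟨Sym2.eq_swap, ?_⟩
                rcases Finset.mem_insert.mp hy with h | h
                · exact absurd (Sum.inr.inj h) (by decide)
                · exact (inr0_mem_SB u).mp h
              · exact absurd h2 (by decide)
          · -- y = w
            match x, hadj with
            | Sum.inl a, hadj =>
              exact absurd ((adj_inl_inr G' u A A' a 1).mp hadj) (by simp)
            | Sum.inr i, hadj =>
              have hx : (Sum.inr i : BigVert V' u) ∈ insert (wVert V' u) (SB u T) :=
                hm _ (by simp)
              rcases (adj_inr_inr G' u A A' i 1).mp hadj with (⟨h1, h2⟩ | ⟨h1, h2⟩) | (⟨h1, h2⟩ | ⟨h1, h2⟩)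
              · subst h1
                left
                refine ⟨rfl, ?_⟩
                rcases Finset.mem_insert.mp hx with h | h
                · exact absurd (Sum.inr.inj h) (by decide)
                · exact (inr0_mem_SB u).mp h
              · exact absurd h2 (by decide)
              · exact absurd h1 (by decide)
              · subst h2
                right
                refine ⟨Sym2.eq_swap, ?_⟩
                rcases Finset.mem_insert.mp hx with h | h
                · exact absurd (Sum.inr.inj h) (by decide)
                · exact (inr2_mem_SB u).mp h
        · left
          refine ⟨he, fun z hz => ?_⟩
          rcases Finset.mem_insert.mp (hm z hz) with rfl | h
          · exact absurd hz hw
          · exact h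
      · rintro (h | h)
        · exact hsub h
        · rcases h with ⟨heq, hv⟩ | ⟨heq, hv⟩
          · rw [heq]
            refine ⟨?_, ?_⟩
            · rw [SimpleGraph.mem_edgeSet, adj_inr_inr]
              exact Or.inl (Or.inl ⟨rfl, rfl⟩)
            · intro z hz
              rcases Sym2.mem_iff.mp hz with rfl | rfl
              · exact Finset.mem_insert_of_mem ((inr0_mem_SB u).mpr hv)
              · exact Finset.mem_insert_self _ _
          · rw [heq]
            refine ⟨?_, ?_⟩
            · rw [SimpleGraph.mem_edgeSet, adj_inr_inr]
              exact Or.inl (Or.inr ⟨rfl, rfl⟩)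
            · intro z hz
              rcases Sym2.mem_iff.mp hz with rfl | rfl
              · exact Finset.mem_insert_self _ _
              · exact Finset.mem_insert_of_mem ((inr2_mem_SB u).mpr hv)
  have hdisjEw : Disjoint E Ew := by
    rw [Set.disjoint_left]
    rintro e heE (⟨rfl, -⟩ | ⟨rfl, -⟩)
    · exact hw_notin _ heE (by simp [wVert])
    · exact hw_notin _ heE (by simp [wVert])
  have hEwcard : Ew.ncard =
      (if vVert V' u ∈ T then 1 else 0) + (if v'Vert V' u ∈ T then 1 else 0) := by
    have hne : s((Sum.inr 0 : BigVert V' u), Sum.inr 1) ≠ s((Sum.inr 1 : BigVert V' u), Sum.inr 2) := by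
      rw [Ne, Sym2.eq_iff]
      rintro (⟨h, -⟩ | ⟨h, -⟩) <;> exact absurd (Sum.inr.inj h) (by decide)
    split_ifs with hv hv' hv'
    · have : Ew = {s((Sum.inr 0 : BigVert V' u), Sum.inr 1),
          s((Sum.inr 1 : BigVert V' u), Sum.inr 2)} := by
        ext e; simp only [hEw, Set.mem_setOf_eq, Set.mem_insert_iff, Set.mem_singleton_iff]
        tauto
      rw [this, Set.ncard_pair hne]
    · have : Ew = {s((Sum.inr 0 : BigVert V' u), Sum.inr 1)} := by
        ext e; simp only [hEw, Set.mem_setOf_eq, Set.mem_singleton_iff]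
        tauto
      rw [this, Set.ncard_singleton]
    · have : Ew = {s((Sum.inr 1 : BigVert V' u), Sum.inr 2)} := by
        ext e; simp only [hEw, Set.mem_setOf_eq, Set.mem_singleton_iff]
        tauto
      rw [this, Set.ncard_singleton]
    · have : Ew = ∅ := by
        ext e; simp only [hEw, Set.mem_setOf_eq, Set.mem_empty_iff_false]
        tauto
      rw [this, Set.ncard_empty]
  show E'.ncard = E.ncard + _
  rw [hsplit, Set.ncard_union_eq hdisjEw (Set.toFinite _) (Set.toFinite _), hEwcard]

end Aux4


lemma arithTT (c : ℂ) (hc2 : c^2 = 2) (hc0 : c ≠ 0) (n E k k' : ℕ) :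
    ((-1:ℂ)^(E + k + k') + (-1:ℂ)^(E + k + k' + (1+1))) / c^(n+3) / c
      = (0 + (-1:ℂ)^(k + k') * ((-1:ℂ)^E / c^n)) / 2 := by
  have h2 : (-1:ℂ)^(E + k + k' + (1+1)) = (-1)^(E+k+k') := by
    rw [pow_add]; norm_num
  rw [h2, show E + k + k' = (k + k') + E by ring, pow_add]
  have hpow : c ^ (n+3) = 2 * c^n * c := by
    rw [pow_add, show c^3 = c^2 * c by ring, hc2]; ring
  rw [hpow]
  have hcn : c ^ n ≠ 0 := pow_ne_zero _ hc0
  field_simp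
  ring_nf
  rw [hc2]
  ring

lemma arithFF (c : ℂ) (hc2 : c^2 = 2) (hc0 : c ≠ 0) (n E : ℕ) :
    ((-1:ℂ)^E + (-1:ℂ)^E) / c^(n+3) / c = ((-1:ℂ)^E / c^n + 0) / 2 := by
  have hpow : c ^ (n+3) = 2 * c^n * c := by
    rw [pow_add, show c^3 = c^2 * c by ring, hc2]; ring
  rw [hpow]
  have hcn : c ^ n ≠ 0 := pow_ne_zero _ hc0
  field_simp
  ring_nf
  rw [hc2]
  ring

lemma arithMix (c : ℂ) (d : ℂ) (e : ℕ) :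
    ((-1:ℂ)^e + (-1:ℂ)^(e + 1)) / d / c = ((0:ℂ) + 0) / 2 := by
  rw [pow_succ]
  ring_nf

/-- Let the neighborhood of `u` in `G'` be partitioned as `A ⊔ A'`, let
`Ḡ` be the induced subgraph of `G'` on `V(G') \ {u}`, and let `G` be the graph obtained
by replacing `u` by the path `v - w - v'` as above.  Contracting the qubit `w` of `|G⟩`
against `|+⟩` gives
`⟨+|_w |G⟩ = (1/2)·(|0⟩_v |0⟩_{v'} ⊗ |Ḡ⟩ + |1⟩_v |1⟩_{v'} ⊗ Z[A ∪ A'] |Ḡ⟩)`. -/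
theorem contractPlus_w_graphState
    {V' : Type} [Fintype V'] [DecidableEq V'] (G' : SimpleGraph V') (u : V')
    (A A' : Finset V') (hN : (↑A ∪ ↑A' : Set V') = G'.neighborSet u)
    (hdisj : Disjoint A A') :
    contractPlus (wVert V' u) (graphState (bigG G' u A A')) =
      fun T : Finset (RemVert V' u) =>
        (extendVV u false false (graphState (SimpleGraph.comap Subtype.val G')) T +
         extendVV u true true
           (Zop (Finset.univ.filter fun a : {x : V' // x ≠ u} => a.val ∈ A ∪ A')
             (graphState (SimpleGraph.comap Subtype.val G'))) T) / 2 := by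
  classical
  funext T
  set c : ℂ := ((Real.sqrt 2 : ℝ) : ℂ) with hc
  have hc2 : c ^ 2 = 2 := by
    rw [hc, ← Complex.ofReal_pow, Real.sq_sqrt (by norm_num : (0:ℝ) ≤ 2)]
    norm_num
  have hc0 : c ≠ 0 := by
    rw [hc]
    exact Complex.ofReal_ne_zero.mpr (Real.sqrt_ne_zero'.mpr (by norm_num))
  set n := Fintype.card {x : V' // x ≠ u} with hn
  have hcardB : Fintype.card (BigVert V' u) = n + 3 := by
    simp [hn, BigVert]
  set T' := restrictT u T with hT'
  set E := edgesIn (SimpleGraph.comap Subtype.val G') T' with hEdef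
  set kA := (T'.filter (fun a => a.1 ∈ A)).card with hkA
  set kA' := (T'.filter (fun a => a.1 ∈ A')).card with hkA'
  have hF : ((Finset.univ.filter fun a : {x : V' // x ≠ u} => a.val ∈ A ∪ A') ∩ T').card
      = kA + kA' := by
    have h1 : (Finset.univ.filter fun a : {x : V' // x ≠ u} => a.val ∈ A ∪ A') ∩ T'
        = T'.filter (fun a => a.1 ∈ A ∨ a.1 ∈ A') := by
      ext a
      simp [Finset.mem_inter, Finset.mem_filter, Finset.mem_union, and_comm]
    rw [h1, Finset.filter_or, Finset.card_union_of_disjoint]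
    rw [Finset.disjoint_left]
    rintro a ha ha'
    exact (Finset.disjoint_left.mp hdisj) (Finset.mem_filter.mp ha).2 (Finset.mem_filter.mp ha').2
  have h0 : contractPlus (wVert V' u) (graphState (bigG G' u A A')) T =
      (graphState (bigG G' u A A') (SB u T) +
       graphState (bigG G' u A A') (insert (wVert V' u) (SB u T))) / c := rfl
  rw [h0, graphState, graphState, ← add_div, div_div,
    edgesIn_insert_w G' u A A' T, edgesIn_SB G' u A A' T, hcardB, ← hT',
    ← hEdef, ← hkA, ← hkA', ← div_div]
  have hGS : graphState (SimpleGraph.comap Subtype.val G') T' = (-1:ℂ) ^ E / c ^ n := by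
    rw [graphState, ← hEdef, ← hn, hc]
  by_cases hv : vVert V' u ∈ T <;> by_cases hv' : v'Vert V' u ∈ T
  · -- both in: only the `true true` term survives
    rw [if_pos hv, if_pos hv', if_pos hv, if_pos hv']
    have hext1 : extendVV u false false (graphState (SimpleGraph.comap Subtype.val G')) T
        = 0 := by
      rw [extendVV, if_neg]
      simp [hv]
    have hext2 : extendVV u true true
        (Zop (Finset.univ.filter fun a : {x : V' // x ≠ u} => a.val ∈ A ∪ A')
          (graphState (SimpleGraph.comap Subtype.val G'))) T
        = (-1:ℂ) ^ (kA + kA') * ((-1:ℂ) ^ E / c ^ n) := by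
      rw [extendVV, if_pos (by simp [hv, hv']), Zop, ← hT', hF, hGS]
    rw [hext1, hext2]
    exact arithTT c hc2 hc0 n E kA kA'
  · rw [if_pos hv, if_neg hv', if_pos hv, if_neg hv']
    have hext1 : extendVV u false false (graphState (SimpleGraph.comap Subtype.val G')) T
        = 0 := by
      rw [extendVV, if_neg]
      simp [hv]
    have hext2 : extendVV u true true
        (Zop (Finset.univ.filter fun a : {x : V' // x ≠ u} => a.val ∈ A ∪ A')
          (graphState (SimpleGraph.comap Subtype.val G'))) T = 0 := by
      rw [extendVV, if_neg]
      simp [hv']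
    rw [hext1, hext2]
    exact arithMix c _ (E + kA)
  · rw [if_neg hv, if_pos hv', if_neg hv, if_pos hv']
    have hext1 : extendVV u false false (graphState (SimpleGraph.comap Subtype.val G')) T
        = 0 := by
      rw [extendVV, if_neg]
      simp [hv']
    have hext2 : extendVV u true true
        (Zop (Finset.univ.filter fun a : {x : V' // x ≠ u} => a.val ∈ A ∪ A')
          (graphState (SimpleGraph.comap Subtype.val G'))) T = 0 := by
      rw [extendVV, if_neg]
      simp [hv]
    rw [hext1, hext2]
    exact arithMix c _ (E + kA')
  · rw [if_neg hv, if_neg hv', if_neg hv, if_neg hv']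
    have hext1 : extendVV u false false (graphState (SimpleGraph.comap Subtype.val G')) T
        = graphState (SimpleGraph.comap Subtype.val G') T' := by
      rw [extendVV, if_pos (by simp [hv, hv']), ← hT']
    have hext2 : extendVV u true true
        (Zop (Finset.univ.filter fun a : {x : V' // x ≠ u} => a.val ∈ A ∪ A')
          (graphState (SimpleGraph.comap Subtype.val G'))) T = 0 := by
      rw [extendVV, if_neg]
      simp [hv]
    rw [hext1, hext2, hGS]
    exact arithFF c hc2 hc0 n E
end

section
/- Let G' be a finite simple graph on an n-element vertex set, let u ∈ V(G'), and let the neighborhood of u in G' be partitioned as N(u) = A ⊔ A'. Let Ḡ be the induced subgraph of G' on V(G')∖{u}, and let G be the simple graph on vertex set (V(G')∖{u}) ∪ {v, w, v'} (three new vertices) whose edges are the edges of Ḡ together with {v,a} for each a ∈ A, {v',a'} for each a' ∈ A', and {v,w}, {w,v'}. Then contracting qubit w of |G⟩ against |−⟩ gives ⟨−|_w |G⟩ = (1/2)·( |1⟩_v |0⟩_{v'} ⊗ Z[A] |Ḡ⟩ + |0⟩_v |1⟩_{v'} ⊗ Z[A'] |Ḡ⟩ ), where |b⟩_v |b'⟩_{v'}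 ⊗ |S'⟩ denotes the computational basis state of the qubits (V(G')∖{u}) ∪ {v,v'} in which v has value b, v' has value b', and the remaining qubits are given by S' ⊆ V(G')∖{u}. -/
lemma edgesIn_insert {W : Type} [Fintype W] [DecidableEq W] (H : SimpleGraph W)
    (w : W) (S : Finset W) (hw : w ∉ S) :
    edgesIn H (insert w S) = edgesIn H S + {x : W | x ∈ S ∧ H.Adj w x}.ncard := by
  classical
  have himage : {e : Sym2 W | e ∈ H.edgeSet ∧ ∀ x ∈ e, x ∈ insert w S}
      = {e : Sym2 W | e ∈ H.edgeSet ∧ ∀ x ∈ e, x ∈ S} ∪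
        (fun x => s(w, x)) '' {x : W | x ∈ S ∧ H.Adj w x} := by
    ext e
    induction e using Sym2.ind with
    | _ x y =>
      simp only [Set.mem_union, Set.mem_setOf_eq, Set.mem_image]
      constructor
      · rintro ⟨he, hmem⟩
        by_cases hx : x = w
        · subst hx
          have hadj : H.Adj x y := (SimpleGraph.mem_edgeSet _).mp he
          have hy : y ∈ S := by
            rcases Finset.mem_insert.mp (hmem y (by simp)) with h | h
            · exact absurd h.symm hadj.ne
            · exact h
          exact Or.inr ⟨y, ⟨hy, hadj⟩, rfl⟩
        · by_cases hy : y = w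
          · subst hy
            have hadj : H.Adj x y := (SimpleGraph.mem_edgeSet _).mp he
            refine Or.inr ⟨x, ⟨?_, hadj.symm⟩, Sym2.eq_swap⟩
            rcases Finset.mem_insert.mp (hmem x (by simp)) with h | h
            · exact absurd h hx
            · exact h
          · refine Or.inl ⟨he, fun z hz => ?_⟩
            rcases Finset.mem_insert.mp (hmem z hz) with h | h
            · subst h; rcases Sym2.mem_iff.mp hz with h | h <;> simp_all
            · exact h
      · rintro (⟨he, hmem⟩ | ⟨a, ⟨haS, ha⟩, heq⟩)
        · exact ⟨he, fun z hz => Finset.mem_insert_of_mem (hmem z hz)⟩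
        · rw [← heq]
          refine ⟨(SimpleGraph.mem_edgeSet _).mpr ha, fun z hz => ?_⟩
          rcases Sym2.mem_iff.mp hz with rfl | rfl
          · exact Finset.mem_insert_self _ _
          · exact Finset.mem_insert_of_mem haS
  have hdisj : Disjoint {e : Sym2 W | e ∈ H.edgeSet ∧ ∀ x ∈ e, x ∈ S}
      ((fun x => s(w, x)) '' {x : W | x ∈ S ∧ H.Adj w x}) := by
    rw [Set.disjoint_left]
    rintro e ⟨he, hmem⟩ ⟨a, ⟨haS, ha⟩, heq⟩
    have : w ∈ e := by rw [← heq]; exact Sym2.mem_mk_left _ _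
    exact hw (hmem w this)
  have hinj : Set.InjOn (fun x => s(w, x)) {x : W | x ∈ S ∧ H.Adj w x} := by
    rintro a ⟨_, _⟩ b ⟨_, _⟩ h
    simpa using Sym2.congr_right.mp h
  rw [edgesIn, himage, Set.ncard_union_eq hdisj (Set.toFinite _) (Set.toFinite _), edgesIn,
    Set.ncard_image_of_injOn hinj]

lemma edgesIn_map {U W : Type} (f : U ↪ W) (H : SimpleGraph W) (H' : SimpleGraph U)
    (hadj : ∀ a b, H'.Adj a b ↔ H.Adj (f a) (f b)) (S : Finset U) :
    edgesIn H (S.map f) = edgesIn H' S := by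
  have himg : {e : Sym2 W | e ∈ H.edgeSet ∧ ∀ x ∈ e, x ∈ S.map f}
      = Sym2.map f '' {e : Sym2 U | e ∈ H'.edgeSet ∧ ∀ x ∈ e, x ∈ S} := by
    ext e
    induction e using Sym2.ind with
    | _ x y =>
      simp only [Set.mem_image, Set.mem_setOf_eq]
      constructor
      · rintro ⟨he, hmem⟩
        obtain ⟨a, haS, rfl⟩ := Finset.mem_map.mp (hmem x (by simp))
        obtain ⟨b, hbS, rfl⟩ := Finset.mem_map.mp (hmem y (by simp))
        refine ⟨s(a, b), ⟨(hadj a b).mpr ((SimpleGraph.mem_edgeSet _).mp he), fun z hz => ?_⟩, by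
          rw [Sym2.map_pair_eq]⟩
        rcases Sym2.mem_iff.mp hz with rfl | rfl <;> assumption
      · rintro ⟨e', ⟨he', hmem'⟩, heq⟩
        rw [← heq]
        induction e' using Sym2.ind with
        | _ a b =>
          rw [Sym2.map_pair_eq]
          refine ⟨(SimpleGraph.mem_edgeSet _).mpr
            ((hadj a b).mp ((SimpleGraph.mem_edgeSet _).mp he')), fun z hz => ?_⟩
          rcases Sym2.mem_iff.mp hz with rfl | rfl
          · exact Finset.mem_map_of_mem f (hmem' a (by simp))
          · exact Finset.mem_map_of_mem f (hmem' b (by simp))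
  rw [edgesIn, himg, Set.ncard_image_of_injective _ (Sym2.map.injective f.injective), edgesIn]

def inlE (V' : Type) (u : V') : {x : V' // x ≠ u} ↪ BigVert V' u :=
  ⟨Sum.inl, fun _ _ h => Sum.inl.inj h⟩

/-- Let the neighborhood of `u` in `G'` be partitioned as `A ⊔ A'`, let
`Ḡ` be the induced subgraph of `G'` on `V(G') \ {u}`, and let `G` be the graph obtained
by replacing `u` by the path `v - w - v'` as above.  Contracting the qubit `w` of `|G⟩`
against `|−⟩` gives
`⟨−|_w |G⟩ = (1/2)·(|1⟩_v |0⟩_{v'} ⊗ Z[A] |Ḡ⟩ + |0⟩_v |1⟩_{v'} ⊗ Z[A'] |Ḡ⟩)`. -/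
theorem contractMinus_w_graphState
    {V' : Type} [Fintype V'] [DecidableEq V'] (G' : SimpleGraph V') (u : V')
    (A A' : Finset V') (hN : (↑A ∪ ↑A' : Set V') = G'.neighborSet u)
    (hdisj : Disjoint A A') :
    contractMinus (wVert V' u) (graphState (bigG G' u A A')) =
      fun T : Finset (RemVert V' u) =>
        (extendVV u true false
           (Zop (Finset.univ.filter fun a : {x : V' // x ≠ u} => a.val ∈ A)
             (graphState (SimpleGraph.comap Subtype.val G'))) T +
         extendVV u false true
           (Zop (Finset.univ.filter fun a : {x : V' // x ≠ u} => a.val ∈ A')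
             (graphState (SimpleGraph.comap Subtype.val G'))) T) / 2 := by
  classical
  funext T
  set Gbig : SimpleGraph (BigVert V' u) := bigG G' u A A' with hGbig
  set Gbar : SimpleGraph {x : V' // x ≠ u} := SimpleGraph.comap Subtype.val G' with hGbar
  set S : Finset {x : V' // x ≠ u} := restrictT u T with hSdef
  set T₀ : Finset (BigVert V' u) :=
    T.map (Function.Embedding.subtype fun x => x ≠ wVert V' u) with hT₀def
  set base : Finset (BigVert V' u) := S.map (inlE V' u) with hbase
  -- membership characterizations
  have hmemT₀ : ∀ (x : BigVert V' u) (hx : x ≠ wVert V' u),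
      (x ∈ T₀ ↔ (⟨x, hx⟩ : RemVert V' u) ∈ T) := by
    intro x hx
    simp only [hT₀def, Finset.mem_map, Function.Embedding.coe_subtype]
    constructor
    · rintro ⟨a, ha, rfl⟩
      simpa using ha
    · exact fun h => ⟨_, h, rfl⟩
  have hwT₀ : wVert V' u ∉ T₀ := by
    simp only [hT₀def, Finset.mem_map, Function.Embedding.coe_subtype]
    rintro ⟨a, _, ha⟩
    exact a.2 ha
  have hmembase : ∀ x : BigVert V' u,
      x ∈ base ↔ ∃ a : {x : V' // x ≠ u}, a ∈ S ∧ Sum.inl a = x := by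
    intro x; simp [hbase, inlE, Finset.mem_map]; rfl
  have hmemS : ∀ a : {x : V' // x ≠ u},
      a ∈ S ↔ (⟨Sum.inl a, Sum.inl_ne_inr⟩ : RemVert V' u) ∈ T := by
    intro a; simp [hSdef, restrictT]
  have hv0base : (Sum.inr 0 : BigVert V' u) ∉ base := by
    rw [hmembase]; rintro ⟨a, _, h⟩; exact Sum.inl_ne_inr h
  have hv2base : (Sum.inr 2 : BigVert V' u) ∉ base := by
    rw [hmembase]; rintro ⟨a, _, h⟩; exact Sum.inl_ne_inr h
  -- adjacency facts
  have hadjw : ∀ x, Gbig.Adj (wVert V' u) x ↔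
      x = Sum.inr 0 ∨ x = Sum.inr 2 := by
    intro x
    cases x with
    | inl a => simp [hGbig, bigG, SimpleGraph.fromRel_adj, bigRel]
    | inr i => fin_cases i <;> simp [hGbig, bigG, SimpleGraph.fromRel_adj, bigRel]
  have hadjv : ∀ a : {x : V' // x ≠ u},
      Gbig.Adj (Sum.inr 0) (Sum.inl a) ↔ a.val ∈ A := by
    intro a; simp [hGbig, bigG, SimpleGraph.fromRel_adj, bigRel]
  have hadjv' : ∀ a : {x : V' // x ≠ u},
      Gbig.Adj (Sum.inr 2) (Sum.inl a) ↔ a.val ∈ A' := by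
    intro a; simp [hGbig, bigG, SimpleGraph.fromRel_adj, bigRel]
  have hadjvv' : ¬ Gbig.Adj (Sum.inr 0) (Sum.inr 2) := by
    simp [hGbig, bigG, SimpleGraph.fromRel_adj, bigRel]
  have hadjbar : ∀ a b : {x : V' // x ≠ u},
      Gbar.Adj a b ↔ Gbig.Adj (inlE V' u a) (inlE V' u b) := by
    intro a b
    have h2 : Gbig.Adj (Sum.inl a) (Sum.inl b) ↔ G'.Adj a.val b.val := by
      simp only [hGbig, bigG, SimpleGraph.fromRel_adj, bigRel]
      constructor
      · rintro ⟨hne, h | h⟩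
        · exact h
        · exact h.symm
      · intro h
        exact ⟨fun he => h.ne (Subtype.ext_iff.mp (Sum.inl.inj he)), Or.inl h⟩
    rw [hGbar, SimpleGraph.comap_adj]
    exact h2.symm
  have hebase : edgesIn Gbig base = edgesIn Gbar S := edgesIn_map _ _ _ hadjbar S
  -- counting neighbors of v / v' in base
  have hcntA : {x : BigVert V' u | x ∈ base ∧ Gbig.Adj (Sum.inr 0) x}.ncard
      = ((Finset.univ.filter fun a : {x : V' // x ≠ u} => a.val ∈ A) ∩ S).card := by
    have hset : {x : BigVert V' u | x ∈ base ∧ Gbig.Adj (Sum.inr 0) x}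
        = ↑(((Finset.univ.filter fun a : {x : V' // x ≠ u} => a.val ∈ A) ∩ S).map (inlE V' u)) := by
      ext x
      simp only [Set.mem_setOf_eq, Finset.coe_map, Set.mem_image, Finset.mem_coe,
        Finset.mem_inter, Finset.mem_filter, Finset.mem_univ, true_and]
      constructor
      · rintro ⟨hxb, hadj⟩
        obtain ⟨a, haS, rfl⟩ := (hmembase x).mp hxb
        exact ⟨a, ⟨(hadjv a).mp hadj, haS⟩, rfl⟩
      · rintro ⟨a, ⟨haA, haS⟩, rfl⟩
        exact ⟨(hmembase _).mpr ⟨a, haS, rfl⟩, (hadjv a).mpr haA⟩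
    rw [hset, Set.ncard_coe_finset, Finset.card_map]
  have hcntA' : {x : BigVert V' u | x ∈ base ∧ Gbig.Adj (Sum.inr 2) x}.ncard
      = ((Finset.univ.filter fun a : {x : V' // x ≠ u} => a.val ∈ A') ∩ S).card := by
    have hset : {x : BigVert V' u | x ∈ base ∧ Gbig.Adj (Sum.inr 2) x}
        = ↑(((Finset.univ.filter fun a : {x : V' // x ≠ u} => a.val ∈ A') ∩ S).map (inlE V' u)) := by
      ext x
      simp only [Set.mem_setOf_eq, Finset.coe_map, Set.mem_image, Finset.mem_coe,
        Finset.mem_inter, Finset.mem_filter, Finset.mem_univ, true_and]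
      constructor
      · rintro ⟨hxb, hadj⟩
        obtain ⟨a, haS, rfl⟩ := (hmembase x).mp hxb
        exact ⟨a, ⟨(hadjv' a).mp hadj, haS⟩, rfl⟩
      · rintro ⟨a, ⟨haA, haS⟩, rfl⟩
        exact ⟨(hmembase _).mpr ⟨a, haS, rfl⟩, (hadjv' a).mpr haA⟩
    rw [hset, Set.ncard_coe_finset, Finset.card_map]
  -- cardinality of the big vertex set
  have hcard : Fintype.card (BigVert V' u) = Fintype.card {x : V' // x ≠ u} + 3 := by
    simp [Fintype.card_sum]
  set n : ℕ := Fintype.card {x : V' // x ≠ u} with hn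
  have hc0 : ((Real.sqrt 2 : ℝ) : ℂ) ≠ 0 := by
    simp only [ne_eq, Complex.ofReal_eq_zero]
    positivity
  have hc2 : ((Real.sqrt 2 : ℝ) : ℂ) ^ 2 = 2 := by
    norm_cast
    rw [Real.sq_sqrt] <;> norm_num
  -- the main case split
  by_cases hv : vVert V' u ∈ T <;> by_cases hv' : v'Vert V' u ∈ T
  · -- both in : LHS = 0, RHS = 0
    have hT₀eq : T₀ = insert (Sum.inr 0) (insert (Sum.inr 2) base) := by
      ext x
      cases x with
      | inl a =>
        rw [hmemT₀ _ Sum.inl_ne_inr]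
        simp only [Finset.mem_insert]
        rw [hmembase]
        constructor
        · intro h
          exact Or.inr (Or.inr ⟨a, (hmemS a).mpr h, rfl⟩)
        · rintro (h | h | ⟨b, hb, hb2⟩)
          · exact absurd h (by simp)
          · exact absurd h (by simp)
          · cases Sum.inl.inj hb2; exact (hmemS a).mp hb
      | inr i =>
        fin_cases i
        · show (Sum.inr 0 : BigVert V' u) ∈ T₀ ↔ (Sum.inr 0 : BigVert V' u) ∈ _
          rw [hmemT₀ (Sum.inr 0) (vVert V' u).2]
          simp only [Finset.mem_insert]
          constructor
          · intro _; exact Or.inl (by trivial)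
          · intro _; exact hv
        · constructor
          · intro h; exact absurd h hwT₀
          · rintro h
            rcases Finset.mem_insert.mp h with h | h
            · exact absurd (Sum.inr.inj h) (by decide)
            · rcases Finset.mem_insert.mp h with h | h
              · exact absurd (Sum.inr.inj h) (by decide)
              · exact absurd ((hmembase _).mp h) (by rintro ⟨a, _, h⟩; exact Sum.inl_ne_inr h)
        · show (Sum.inr 2 : BigVert V' u) ∈ T₀ ↔ (Sum.inr 2 : BigVert V' u) ∈ _
          rw [hmemT₀ (Sum.inr 2) (v'Vert V' u).2]
          simp only [Finset.mem_insert]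
          constructor
          · intro _
            exact Or.inr (Or.inl (by trivial))
          · intro _; exact hv'
    have hNw : {x : BigVert V' u | x ∈ T₀ ∧ Gbig.Adj (wVert V' u) x}
        = {Sum.inr 0, Sum.inr 2} := by
      ext x
      simp only [Set.mem_setOf_eq, Set.mem_insert_iff, Set.mem_singleton_iff, hadjw x]
      constructor
      · rintro ⟨_, h⟩; exact h
      · rintro (rfl | rfl)
        · exact ⟨by rw [hT₀eq]; exact Finset.mem_insert_self _ _, Or.inl rfl⟩
        · refine ⟨by rw [hT₀eq]; exact Finset.mem_insert_of_mem (Finset.mem_insert_self _ _),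
            Or.inr rfl⟩
    have heIns : edgesIn Gbig (insert (wVert V' u) T₀) = edgesIn Gbig T₀ + 2 := by
      rw [edgesIn_insert Gbig _ _ hwT₀, hNw]
      congr 1
      rw [Set.ncard_pair (fun h => absurd (Sum.inr.inj h) (by decide))]
    -- both sides are zero
    rw [contractMinus]
    simp only [← hT₀def]
    rw [graphState, graphState, heIns, extendVV, extendVV]
    rw [if_neg (by simp [hv, hv']), if_neg (by simp [hv, hv'])]
    rw [pow_add]
    norm_num
  · -- v in, v' out
    have hT₀eq : T₀ = insert (Sum.inr 0) base := by
      ext x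
      cases x with
      | inl a =>
        rw [hmemT₀ _ Sum.inl_ne_inr]
        simp only [Finset.mem_insert]
        rw [hmembase]
        constructor
        · intro h
          exact Or.inr ⟨a, (hmemS a).mpr h, rfl⟩
        · rintro (h | ⟨b, hb, hb2⟩)
          · exact absurd h (by simp)
          · cases Sum.inl.inj hb2; exact (hmemS a).mp hb
      | inr i =>
        fin_cases i
        · show (Sum.inr 0 : BigVert V' u) ∈ T₀ ↔ (Sum.inr 0 : BigVert V' u) ∈ _
          rw [hmemT₀ (Sum.inr 0) (vVert V' u).2]
          simp only [Finset.mem_insert]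
          constructor
          · intro _; exact Or.inl (by trivial)
          · intro _; exact hv
        · constructor
          · intro h; exact absurd h hwT₀
          · intro h
            rcases Finset.mem_insert.mp h with h | h
            · exact absurd (Sum.inr.inj h) (by decide)
            · exact absurd ((hmembase _).mp h) (by rintro ⟨a, _, h⟩; exact Sum.inl_ne_inr h)
        · show (Sum.inr 2 : BigVert V' u) ∈ T₀ ↔ (Sum.inr 2 : BigVert V' u) ∈ _
          rw [hmemT₀ (Sum.inr 2) (v'Vert V' u).2]
          constructor
          · intro h; exact absurd h hv'
          · intro h
            rcases Finset.mem_insert.mp h with h | h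
            · exact absurd (Sum.inr.inj h) (by decide)
            · exact absurd ((hmembase _).mp h) (by rintro ⟨a, _, h⟩; exact Sum.inl_ne_inr h)
    have hNw : {x : BigVert V' u | x ∈ T₀ ∧ Gbig.Adj (wVert V' u) x} = {Sum.inr 0} := by
      ext x
      simp only [Set.mem_setOf_eq, Set.mem_singleton_iff, hadjw x]
      constructor
      · rintro ⟨hx, h | h⟩
        · exact h
        · subst h
          rw [hT₀eq] at hx
          rcases Finset.mem_insert.mp hx with h | h
          · exact absurd (Sum.inr.inj h) (by decide)
          · exact absurd h hv2base
      · rintro rfl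
        exact ⟨by rw [hT₀eq]; exact Finset.mem_insert_self _ _, Or.inl rfl⟩
    have heIns : edgesIn Gbig (insert (wVert V' u) T₀) = edgesIn Gbig T₀ + 1 := by
      rw [edgesIn_insert Gbig _ _ hwT₀, hNw, Set.ncard_singleton]
    have heT₀ : edgesIn Gbig T₀ = edgesIn Gbar S
        + ((Finset.univ.filter fun a : {x : V' // x ≠ u} => a.val ∈ A) ∩ S).card := by
      rw [hT₀eq, edgesIn_insert Gbig _ _ hv0base, hebase, hcntA]
    rw [contractMinus]
    simp only [← hT₀def]
    rw [graphState, graphState, heIns, heT₀, extendVV, extendVV]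
    rw [if_pos (by simp [hv, hv']), if_neg (by simp [hv, hv'])]
    rw [Zop, graphState, ← hSdef]
    rw [hcard, ← hn]
    set kA : ℕ := ((Finset.univ.filter fun a : {x : V' // x ≠ u} => a.val ∈ A) ∩ S).card
    have hpow : ((Real.sqrt 2 : ℝ) : ℂ) ^ (n + 3) * ((Real.sqrt 2 : ℝ) : ℂ)
        = ((Real.sqrt 2 : ℝ) : ℂ) ^ n * 4 := by
      rw [pow_add]
      have : ((Real.sqrt 2 : ℝ) : ℂ) ^ 3 * ((Real.sqrt 2 : ℝ) : ℂ)
          = (((Real.sqrt 2 : ℝ) : ℂ) ^ 2) ^ 2 := by ring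
      rw [mul_assoc, this, hc2]
      norm_num
    field_simp
    rw [hpow]
    rw [pow_add, pow_succ, pow_add]
    ring
  · -- v out, v' in
    have hT₀eq : T₀ = insert (Sum.inr 2) base := by
      ext x
      cases x with
      | inl a =>
        rw [hmemT₀ _ Sum.inl_ne_inr]
        simp only [Finset.mem_insert]
        rw [hmembase]
        constructor
        · intro h
          exact Or.inr ⟨a, (hmemS a).mpr h, rfl⟩
        · rintro (h | ⟨b, hb, hb2⟩)
          · exact absurd h (by simp)
          · cases Sum.inl.inj hb2; exact (hmemS a).mp hb
      | inr i =>
        fin_cases i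
        · show (Sum.inr 0 : BigVert V' u) ∈ T₀ ↔ (Sum.inr 0 : BigVert V' u) ∈ _
          rw [hmemT₀ (Sum.inr 0) (vVert V' u).2]
          constructor
          · intro h; exact absurd h hv
          · intro h
            rcases Finset.mem_insert.mp h with h | h
            · exact absurd (Sum.inr.inj h) (by decide)
            · exact absurd ((hmembase _).mp h) (by rintro ⟨a, _, h⟩; exact Sum.inl_ne_inr h)
        · constructor
          · intro h; exact absurd h hwT₀
          · intro h
            rcases Finset.mem_insert.mp h with h | h
            · exact absurd (Sum.inr.inj h) (by decide)
            · exact absurd ((hmembase _).mp h) (by rintro ⟨a, _, h⟩; exact Sum.inl_ne_inr h)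
        · show (Sum.inr 2 : BigVert V' u) ∈ T₀ ↔ (Sum.inr 2 : BigVert V' u) ∈ _
          rw [hmemT₀ (Sum.inr 2) (v'Vert V' u).2]
          simp only [Finset.mem_insert]
          constructor
          · intro _; exact Or.inl (by trivial)
          · intro _; exact hv'
    have hNw : {x : BigVert V' u | x ∈ T₀ ∧ Gbig.Adj (wVert V' u) x} = {Sum.inr 2} := by
      ext x
      simp only [Set.mem_setOf_eq, Set.mem_singleton_iff, hadjw x]
      constructor
      · rintro ⟨hx, h | h⟩
        · subst h
          rw [hT₀eq] at hx
          rcases Finset.mem_insert.mp hx with h | h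
          · exact absurd (Sum.inr.inj h) (by decide)
          · exact absurd h hv0base
        · exact h
      · rintro rfl
        exact ⟨by rw [hT₀eq]; exact Finset.mem_insert_self _ _, Or.inr rfl⟩
    have heIns : edgesIn Gbig (insert (wVert V' u) T₀) = edgesIn Gbig T₀ + 1 := by
      rw [edgesIn_insert Gbig _ _ hwT₀, hNw, Set.ncard_singleton]
    have heT₀ : edgesIn Gbig T₀ = edgesIn Gbar S
        + ((Finset.univ.filter fun a : {x : V' // x ≠ u} => a.val ∈ A') ∩ S).card := by
      rw [hT₀eq, edgesIn_insert Gbig _ _ hv2base, hebase, hcntA']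
    rw [contractMinus]
    simp only [← hT₀def]
    rw [graphState, graphState, heIns, heT₀, extendVV, extendVV]
    rw [if_neg (by simp [hv, hv']), if_pos (by simp [hv, hv'])]
    rw [Zop, graphState, ← hSdef]
    rw [hcard, ← hn]
    set kA : ℕ := ((Finset.univ.filter fun a : {x : V' // x ≠ u} => a.val ∈ A') ∩ S).card
    have hpow : ((Real.sqrt 2 : ℝ) : ℂ) ^ (n + 3) * ((Real.sqrt 2 : ℝ) : ℂ)
        = ((Real.sqrt 2 : ℝ) : ℂ) ^ n * 4 := by
      rw [pow_add]
      have : ((Real.sqrt 2 : ℝ) : ℂ) ^ 3 * ((Real.sqrt 2 : ℝ) : ℂ)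
          = (((Real.sqrt 2 : ℝ) : ℂ) ^ 2) ^ 2 := by ring
      rw [mul_assoc, this, hc2]
      norm_num
    field_simp
    rw [hpow]
    rw [pow_add, pow_succ, pow_add]
    ring
  · -- both out
    have hT₀eq : T₀ = base := by
      ext x
      cases x with
      | inl a =>
        rw [hmemT₀ _ Sum.inl_ne_inr, hmembase]
        constructor
        · intro h; exact ⟨a, (hmemS a).mpr h, rfl⟩
        · rintro ⟨b, hb, hb2⟩
          cases Sum.inl.inj hb2; exact (hmemS a).mp hb
      | inr i =>
        fin_cases i
        · show (Sum.inr 0 : BigVert V' u) ∈ T₀ ↔ (Sum.inr 0 : BigVert V' u) ∈ _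
          rw [hmemT₀ (Sum.inr 0) (vVert V' u).2]
          constructor
          · intro h; exact absurd h hv
          · intro h; exact absurd h hv0base
        · constructor
          · intro h; exact absurd h hwT₀
          · intro h
            exact absurd ((hmembase _).mp h) (by rintro ⟨a, _, h⟩; exact Sum.inl_ne_inr h)
        · show (Sum.inr 2 : BigVert V' u) ∈ T₀ ↔ (Sum.inr 2 : BigVert V' u) ∈ _
          rw [hmemT₀ (Sum.inr 2) (v'Vert V' u).2]
          constructor
          · intro h; exact absurd h hv'
          · intro h; exact absurd h hv2base
    have hNw : {x : BigVert V' u | x ∈ T₀ ∧ Gbig.Adj (wVert V' u) x} = ∅ := by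
      ext x
      simp only [Set.mem_setOf_eq, Set.mem_empty_iff_false, iff_false]
      rintro ⟨hx, h⟩
      rcases (hadjw x).mp h with rfl | rfl
      · rw [hT₀eq] at hx; exact hv0base hx
      · rw [hT₀eq] at hx; exact hv2base hx
    have heIns : edgesIn Gbig (insert (wVert V' u) T₀) = edgesIn Gbig T₀ := by
      rw [edgesIn_insert Gbig _ _ hwT₀, hNw, Set.ncard_empty, add_zero]
    rw [contractMinus]
    simp only [← hT₀def]
    rw [graphState, graphState, heIns, extendVV, extendVV]
    rw [if_neg (by simp [hv, hv']), if_neg (by simp [hv, hv'])]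
    norm_num
end
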